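/- arXiv:1903.02091 — 4 statements merged into one kernel-verified Lean document; each statement's English description precedes it below -/
import Mathlib

section
/- For R, Rc in SO(3), define the attitude error function Ψ(R, Rc) = (1/2) tr(I - Rc^T R) and the attitude error vector e_R = (1/2)(Rc^T R - R^T Rc)^∨. Then (1/2)‖e_R‖^2 ≤ Ψ(R, Rc), and if Ψ(R, Rc) ≤ ψ1 < 2, then Ψ(R, Rc) ≤ (1/(2 - ψ1))‖e_R‖^2. -/
set_option maxHeartbeats 800000

open Matrix

/-- Euclidean norm of a vector in `ℝ³`. -/
noncomputable def enorm3 (x : Fin 3 → ℝ) : ℝ := Real.sqrt (∑ i, x i ^ 2)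

/-- The vee map, inverse of the hat map `x ↦ x̂` with `x̂ y = x × y`. -/
def vee (M : Matrix (Fin 3) (Fin 3) ℝ) : Fin 3 → ℝ := ![M 2 1, M 0 2, M 1 0]

lemma stmt3_aux (Q : Matrix (Fin 3) (Fin 3) ℝ)
    (hQ1 : Qᵀ * Q = 1) (hdet : Q.det = 1) (ψ1 : ℝ) :
    (1 / 2) * enorm3 ((1 / 2 : ℝ) • vee (Q - Qᵀ)) ^ 2
        ≤ (1 / 2) * ((1 : Matrix (Fin 3) (Fin 3) ℝ) - Q).trace ∧
      ((1 / 2) * ((1 : Matrix (Fin 3) (Fin 3) ℝ) - Q).trace ≤ ψ1 → ψ1 < 2 →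
        (1 / 2) * ((1 : Matrix (Fin 3) (Fin 3) ℝ) - Q).trace
          ≤ (1 / (2 - ψ1)) * enorm3 ((1 / 2 : ℝ) • vee (Q - Qᵀ)) ^ 2) := by
  set Ψ : ℝ := (1 / 2) * ((1 : Matrix (Fin 3) (Fin 3) ℝ) - Q).trace with hΨdef
  set eR : Fin 3 → ℝ := (1 / 2 : ℝ) • vee (Q - Qᵀ) with heRdef
  have hQ2 : Q * Qᵀ = 1 := mul_eq_one_comm.mp hQ1
  have hadj : Q.adjugate = Qᵀ := by
    have h1 : Q * Q.adjugate = 1 := by rw [Matrix.mul_adjugate, hdet, one_smul]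
    exact Matrix.right_inv_eq_right_inv h1 hQ2
  have E : ∀ j k : Fin 3, (Qᵀ * Q) j k = (1 : Matrix (Fin 3) (Fin 3) ℝ) j k := by
    intro j k; rw [hQ1]
  have e00 := E 0 0; have e11 := E 1 1; have e22 := E 2 2
  simp only [Matrix.mul_apply, Fin.sum_univ_three, Matrix.one_apply,
    Matrix.transpose_apply, if_true, eq_self_iff_true] at e00 e11 e22
  norm_num at e00 e11 e22
  have A : ∀ j k : Fin 3, Q.adjugate j k = Qᵀ j k := by intro j k; rw [hadj]
  have c00 := A 0 0; have c11 := A 1 1; have c22 := A 2 2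
  simp [Matrix.adjugate_fin_three] at c00 c11 c22
  have hΨ : Ψ = (3 - (Q 0 0 + Q 1 1 + Q 2 2)) / 2 := by
    rw [hΨdef]
    simp [Matrix.trace, Matrix.diag, Fin.sum_univ_three]
    ring
  have hs : (∑ j, eR j ^ 2) = ((Q 2 1 - Q 1 2) ^ 2 + (Q 0 2 - Q 2 0) ^ 2
      + (Q 1 0 - Q 0 1) ^ 2) / 4 := by
    rw [heRdef]
    simp only [vee, Matrix.sub_apply, Matrix.transpose_apply, Fin.sum_univ_three,
      Pi.smul_apply, smul_eq_mul, Matrix.cons_val_zero, Matrix.cons_val_one,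
      Matrix.head_cons, Matrix.cons_val_two, Matrix.tail_cons]
    ring
  have hsnn : (0:ℝ) ≤ ∑ j, eR j ^ 2 := by positivity
  have henorm : enorm3 eR ^ 2 = ∑ j, eR j ^ 2 := Real.sq_sqrt hsnn
  have key : enorm3 eR ^ 2 = Ψ * (2 - Ψ) := by
    rw [henorm, hs, hΨ]
    linear_combination (1/4 : ℝ) * e00 + (1/4 : ℝ) * e11 + (1/4 : ℝ) * e22
      + (1/2 : ℝ) * c00 + (1/2 : ℝ) * c11 + (1/2 : ℝ) * c22
  have ha : Q 0 0 ≤ 1 := by nlinarith [e00, sq_nonneg (Q 1 0), sq_nonneg (Q 2 0), sq_nonneg (Q 0 0 - 1)]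
  have he : Q 1 1 ≤ 1 := by nlinarith [e11, sq_nonneg (Q 0 1), sq_nonneg (Q 2 1), sq_nonneg (Q 1 1 - 1)]
  have hi : Q 2 2 ≤ 1 := by nlinarith [e22, sq_nonneg (Q 0 2), sq_nonneg (Q 1 2), sq_nonneg (Q 2 2 - 1)]
  have hΨnn : 0 ≤ Ψ := by rw [hΨ]; linarith
  constructor
  · rw [key]; nlinarith [sq_nonneg Ψ]
  · intro h1 h2
    have h3 : 0 < 2 - ψ1 := by linarith
    rw [key, div_mul_eq_mul_div, le_div_iff₀ h3, one_mul]
    nlinarith [mul_nonneg hΨnn (sub_nonneg.mpr h1)]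

/-- For rotation matrices `R, Rc`, with `Ψ = (1/2) tr(I - RcᵀR)` and
`e_R = (1/2)(RcᵀR - RᵀRc)^∨`: `(1/2)‖e_R‖² ≤ Ψ`, and if `Ψ ≤ ψ1 < 2` then
`Ψ ≤ (1/(2-ψ1))‖e_R‖²`. -/
theorem stmt3 (R Rc : Matrix (Fin 3) (Fin 3) ℝ)
    (hR : Rᵀ * R = 1) (hRdet : R.det = 1) (hRc : Rcᵀ * Rc = 1) (hRcdet : Rc.det = 1)
    (ψ1 : ℝ) :
    let Ψ : ℝ := (1 / 2) * ((1 : Matrix (Fin 3) (Fin 3) ℝ) - Rcᵀ * R).trace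
    let eR : Fin 3 → ℝ := (1 / 2 : ℝ) • vee (Rcᵀ * R - Rᵀ * Rc)
    (1 / 2) * enorm3 eR ^ 2 ≤ Ψ ∧
      (Ψ ≤ ψ1 → ψ1 < 2 → Ψ ≤ (1 / (2 - ψ1)) * enorm3 eR ^ 2) := by
  have hQ1 : (Rcᵀ * R)ᵀ * (Rcᵀ * R) = 1 := by
    have hRc' : Rc * Rcᵀ = 1 := mul_eq_one_comm.mp hRc
    calc (Rcᵀ * R)ᵀ * (Rcᵀ * R) = Rᵀ * (Rc * Rcᵀ) * R := by
          simp [Matrix.transpose_mul, Matrix.mul_assoc]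
      _ = 1 := by rw [hRc', Matrix.mul_one, hR]
  have hdet : (Rcᵀ * R).det = 1 := by
    simp [Matrix.det_mul, Matrix.det_transpose, hRdet, hRcdet]
  have hT : Rᵀ * Rc = (Rcᵀ * R)ᵀ := by simp [Matrix.transpose_mul]
  intro Ψ eR
  have heR : eR = (1 / 2 : ℝ) • vee (Rcᵀ * R - (Rcᵀ * R)ᵀ) := by
    simp only [eR, hT]
  rw [heR]
  exact stmt3_aux (Rcᵀ * R) hQ1 hdet ψ1
end

section
/- For any R, Rc in SO(3), the operator norm (induced 2-norm) of the matrix C(Rc^T R) = (1/2)(tr(R^T Rc) I - R^T Rc) is at most 1. -/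
open Matrix

/-- Euclidean norm of a vector in `ℝ³`. -/
noncomputable def enorm (x : Fin 3 → ℝ) : ℝ := Real.sqrt (∑ i, x i ^ 2)

/-- Cayley–Hamilton style identity for 3×3 matrices. -/
lemma ch3 (M : Matrix (Fin 3) (Fin 3) ℝ) :
    adjugate M = M * M - M.trace • M + (adjugate M).trace • 1 := by
  ext i j
  fin_cases i <;> fin_cases j <;>
    simp [adjugate_fin_three, Matrix.mul_apply, Matrix.trace, Matrix.diag,
      Fin.sum_univ_three, Matrix.one_apply] <;> ring

lemma frobCS (A : Matrix (Fin 3) (Fin 3) ℝ) (v : Fin 3 → ℝ) :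
    (A *ᵥ v) ⬝ᵥ (A *ᵥ v) ≤ (∑ i, ∑ j, A i j ^ 2) * (v ⬝ᵥ v) := by
  simp only [mulVec, dotProduct, Fin.sum_univ_three]
  nlinarith [sq_nonneg (A 0 0 * v 1 - A 0 1 * v 0), sq_nonneg (A 0 0 * v 2 - A 0 2 * v 0),
    sq_nonneg (A 0 1 * v 2 - A 0 2 * v 1), sq_nonneg (A 1 0 * v 1 - A 1 1 * v 0),
    sq_nonneg (A 1 0 * v 2 - A 1 2 * v 0), sq_nonneg (A 1 1 * v 2 - A 1 2 * v 1),
    sq_nonneg (A 2 0 * v 1 - A 2 1 * v 0), sq_nonneg (A 2 0 * v 2 - A 2 2 * v 0),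
    sq_nonneg (A 2 1 * v 2 - A 2 2 * v 1)]

lemma traceBBt (B : Matrix (Fin 3) (Fin 3) ℝ) : 0 ≤ (B * Bᵀ).trace := by
  simp only [Matrix.trace, Matrix.diag, Matrix.mul_apply, Matrix.transpose_apply,
    Fin.sum_univ_three]
  nlinarith [mul_self_nonneg (B 0 0), mul_self_nonneg (B 0 1), mul_self_nonneg (B 0 2),
    mul_self_nonneg (B 1 0), mul_self_nonneg (B 1 1), mul_self_nonneg (B 1 2),
    mul_self_nonneg (B 2 0), mul_self_nonneg (B 2 1), mul_self_nonneg (B 2 2)]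

lemma quadBBt (B : Matrix (Fin 3) (Fin 3) ℝ) (v : Fin 3 → ℝ) :
    0 ≤ v ⬝ᵥ ((B * Bᵀ) *ᵥ v) := by
  rw [← Matrix.mulVec_mulVec, Matrix.dotProduct_mulVec]
  rw [show v ᵥ* B = Bᵀ *ᵥ v from (Matrix.mulVec_transpose B v).symm]
  simp only [dotProduct, Fin.sum_univ_three]
  nlinarith [mul_self_nonneg ((Bᵀ *ᵥ v) 0), mul_self_nonneg ((Bᵀ *ᵥ v) 1),
    mul_self_nonneg ((Bᵀ *ᵥ v) 2)]

lemma dot_self_nonneg (w : Fin 3 → ℝ) : 0 ≤ w ⬝ᵥ w := by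
  simp only [dotProduct, Fin.sum_univ_three]
  nlinarith [mul_self_nonneg (w 0), mul_self_nonneg (w 1), mul_self_nonneg (w 2)]

set_option maxHeartbeats 1000000 in
lemma key (E : Matrix (Fin 3) (Fin 3) ℝ) (hE : Eᵀ * E = 1) (hE2 : E * Eᵀ = 1)
    (hdet : E.det = 1) (v : Fin 3 → ℝ) :
    E.trace ^ 2 * (v ⬝ᵥ v) - 2 * E.trace * (v ⬝ᵥ (E *ᵥ v)) + (v ⬝ᵥ v) ≤ 4 * (v ⬝ᵥ v) := by
  set t := E.trace with ht
  set N : ℝ := v ⬝ᵥ v with hN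
  set q : ℝ := v ⬝ᵥ (E *ᵥ v) with hq
  -- adjugate E = Eᵀ, Cayley–Hamilton facts
  have hadj : adjugate E = Eᵀ := by
    have h := mul_adjugate E
    rw [hdet, one_smul] at h
    calc adjugate E = (Eᵀ * E) * adjugate E := by rw [hE, Matrix.one_mul]
      _ = Eᵀ * (E * adjugate E) := by rw [Matrix.mul_assoc]
      _ = Eᵀ := by rw [h, Matrix.mul_one]
  have hch := ch3 E
  rw [hadj, trace_transpose, ← ht] at hch
  have KI : E * E = Eᵀ + t • E - t • 1 := by rw [hch]; abel
  have KIT : Eᵀ * Eᵀ = E + t • Eᵀ - t • 1 := by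
    have h := congrArg Matrix.transpose KI
    simpa [transpose_mul, transpose_smul, transpose_sub, transpose_add,
      transpose_one] using h
  have htr1 : (1 : Matrix (Fin 3) (Fin 3) ℝ).trace = 3 := by simp [trace_one]
  -- the matrix M = 2·1 - E - Eᵀ
  set M : Matrix (Fin 3) (Fin 3) ℝ := (2:ℝ) • 1 - E - Eᵀ with hMdef
  have hMfact : (E - 1)ᵀ * (E - 1) = M := by
    rw [hMdef, transpose_sub, transpose_one, sub_mul, Matrix.mul_sub, Matrix.mul_sub,
      hE, Matrix.one_mul, Matrix.mul_one, Matrix.one_mul]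
    module
  have hMM : M * M = (6 - 2*t) • (1 : Matrix (Fin 3) (Fin 3) ℝ) + (t - 3) • (E + Eᵀ) := by
    simp only [hMdef, Matrix.sub_mul, Matrix.mul_sub, smul_mul_assoc, mul_smul_comm,
      Matrix.one_mul, Matrix.mul_one, KI, KIT, hE, hE2]
    module
  have trM : M.trace = 6 - 2*t := by
    rw [hMdef, trace_sub, trace_sub, trace_smul, htr1, trace_transpose, ← ht]
    simp [smul_eq_mul]; ring
  have trMM : (M*M).trace = 2*(t-3)^2 := by
    rw [hMM, trace_add, trace_smul, trace_smul, trace_add, htr1, trace_transpose, ← ht]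
    simp [smul_eq_mul]; ring
  have trAdjM : (adjugate M).trace = (t-3)^2 := by
    have h := congrArg Matrix.trace (ch3 M)
    rw [trace_add, trace_sub, trace_smul, trace_smul, htr1, trMM, trM] at h
    simp only [smul_eq_mul] at h
    linear_combination (-1/2 : ℝ) * h
  have adjM : adjugate M = (3-t) • ((1-t) • (1 : Matrix (Fin 3) (Fin 3) ℝ) + E + Eᵀ) := by
    rw [ch3 M, hMM, trM, trAdjM, hMdef]
    module
  -- the matrix M' = 2·1 + E + Eᵀ, used only via its adjugate's trace
  set M' : Matrix (Fin 3) (Fin 3) ℝ := (2:ℝ) • 1 + E + Eᵀ with hM'def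
  have hM'fact : (E + 1)ᵀ * (E + 1) = M' := by
    rw [hM'def, transpose_add, transpose_one, add_mul, Matrix.mul_add, Matrix.mul_add,
      hE, Matrix.one_mul, Matrix.mul_one, Matrix.one_mul]
    module
  have hM'M' : M' * M' = (6 - 2*t) • (1 : Matrix (Fin 3) (Fin 3) ℝ) + (5 + t) • (E + Eᵀ) := by
    simp only [hM'def, Matrix.add_mul, Matrix.mul_add, smul_mul_assoc, mul_smul_comm,
      Matrix.one_mul, Matrix.mul_one, KI, KIT, hE, hE2]
    module
  have trM' : M'.trace = 6 + 2*t := by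
    rw [hM'def, trace_add, trace_add, trace_smul, htr1, trace_transpose, ← ht]
    simp [smul_eq_mul]; ring
  have trM'M' : (M'*M').trace = 2*t^2 + 4*t + 18 := by
    rw [hM'M', trace_add, trace_smul, trace_smul, trace_add, htr1, trace_transpose, ← ht]
    simp [smul_eq_mul]; ring
  have trAdjM' : (adjugate M').trace = (t+1)*(t+9) := by
    have h := congrArg Matrix.trace (ch3 M')
    rw [trace_add, trace_sub, trace_smul, trace_smul, htr1, trM'M', trM'] at h
    simp only [smul_eq_mul] at h
    linear_combination (-1/2 : ℝ) * h
  -- PSD certificates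
  have hadjMfact : adjugate M = adjugate (E - 1) * (adjugate (E - 1))ᵀ := by
    rw [← hMfact, adjugate_mul_distrib, adjugate_transpose]
  have hadjM'fact : adjugate M' = adjugate (E + 1) * (adjugate (E + 1))ᵀ := by
    rw [← hM'fact, adjugate_mul_distrib, adjugate_transpose]
  -- dot product facts
  have hdotT : ∀ w : Fin 3 → ℝ, v ⬝ᵥ (Eᵀ *ᵥ w) = (E *ᵥ v) ⬝ᵥ w := by
    intro w
    rw [Matrix.dotProduct_mulVec, Matrix.vecMul_transpose]
  have hEvN : (E *ᵥ v) ⬝ᵥ (E *ᵥ v) = N := by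
    rw [hN]
    have h := congrArg (fun A => v ⬝ᵥ (A *ᵥ v)) hE
    simpa [← Matrix.mulVec_mulVec, hdotT, Matrix.one_mulVec] using h
  have hqT : v ⬝ᵥ (Eᵀ *ᵥ v) = q := by
    rw [hdotT v, dotProduct_comm]
  -- scalar PSD inequality: (3-t)*((1-t)*N + 2*q) ≥ 0
  have hPSD : 0 ≤ (3-t) * ((1-t)*N + 2*q) := by
    have h0 := quadBBt (adjugate (E - 1)) v
    rw [← hadjMfact, adjM] at h0
    rw [Matrix.smul_mulVec, Matrix.add_mulVec, Matrix.add_mulVec,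
      Matrix.smul_mulVec, Matrix.one_mulVec] at h0
    simp only [dotProduct_smul, dotProduct_add, hqT, smul_eq_mul, ← hN, ← hq] at h0
    ring_nf at h0 ⊢
    linarith
  -- trace bound: -1 ≤ t (using (t+1)(t+9) ≥ 0 and t ≥ -3)
  have hdiag : ∀ i : Fin 3, E 0 i * E 0 i + E 1 i * E 1 i + E 2 i * E 2 i = 1 := by
    intro i
    have h := congrFun (congrFun hE i) i
    simpa [Matrix.mul_apply, Matrix.transpose_apply, Fin.sum_univ_three,
      Matrix.one_apply] using h
  have htsum : t = E 0 0 + E 1 1 + E 2 2 := by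
    rw [ht]; simp [Matrix.trace, Matrix.diag, Fin.sum_univ_three]
  have hd0 : -1 ≤ E 0 0 ∧ E 0 0 ≤ 1 := by
    constructor <;> nlinarith [hdiag 0, mul_self_nonneg (E 1 0), mul_self_nonneg (E 2 0),
      sq_nonneg (E 0 0 + 1), sq_nonneg (E 0 0 - 1)]
  have hd1 : -1 ≤ E 1 1 ∧ E 1 1 ≤ 1 := by
    constructor <;> nlinarith [hdiag 1, mul_self_nonneg (E 0 1), mul_self_nonneg (E 2 1),
      sq_nonneg (E 1 1 + 1), sq_nonneg (E 1 1 - 1)]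
  have hd2 : -1 ≤ E 2 2 ∧ E 2 2 ≤ 1 := by
    constructor <;> nlinarith [hdiag 2, mul_self_nonneg (E 0 2), mul_self_nonneg (E 1 2),
      sq_nonneg (E 2 2 + 1), sq_nonneg (E 2 2 - 1)]
  have ht3' : t ≤ 3 := by
    rw [htsum]; linarith [hd0.2, hd1.2, hd2.2]
  have htm3 : -3 ≤ t := by
    rw [htsum]; linarith [hd0.1, hd1.1, hd2.1]
  have ht1 : -1 ≤ t := by
    have h0 : 0 ≤ (t+1)*(t+9) := by
      rw [← trAdjM', hadjM'fact]; exact traceBBt _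
    nlinarith
  -- basic Cauchy–Schwarz bounds on q
  have hNnn : 0 ≤ N := by
    rw [hN]; simp only [dotProduct, Fin.sum_univ_three]
    nlinarith [mul_self_nonneg (v 0), mul_self_nonneg (v 1), mul_self_nonneg (v 2)]
  have hsub : ((E - 1) *ᵥ v) ⬝ᵥ ((E - 1) *ᵥ v) = 2*N - 2*q := by
    rw [Matrix.sub_mulVec, Matrix.one_mulVec, dotProduct_sub, sub_dotProduct,
      sub_dotProduct, hEvN, dotProduct_comm (E *ᵥ v) v, ← hq, ← hN]
    ring
  have hadd : ((E + 1) *ᵥ v) ⬝ᵥ ((E + 1) *ᵥ v) = 2*N + 2*q := by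
    rw [Matrix.add_mulVec, Matrix.one_mulVec, dotProduct_add, add_dotProduct,
      add_dotProduct, hEvN, dotProduct_comm (E *ᵥ v) v, ← hq, ← hN]
    ring
  have h1 : q ≤ N := by
    have h := dot_self_nonneg ((E - 1) *ᵥ v)
    rw [hsub] at h; linarith
  have h2 : -N ≤ q := by
    have h := dot_self_nonneg ((E + 1) *ᵥ v)
    rw [hadd] at h; linarith
  -- Frobenius bound : q ≥ (t-2) N
  have hfrob : (∑ i, ∑ j, (E - 1) i j ^ 2) = 6 - 2*t := by
    have h := congrArg Matrix.trace hMfact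
    rw [trM] at h
    simp only [Matrix.trace, Matrix.diag, Matrix.mul_apply, Matrix.transpose_apply,
      Fin.sum_univ_three] at h ⊢
    linear_combination h
  have h4 : (t-2)*N ≤ q := by
    have h := frobCS (E - 1) v
    rw [hsub, hfrob, ← hN] at h
    nlinarith
  -- final case analysis
  rcases le_or_gt t 0 with hneg | hpos
  · nlinarith [mul_nonneg (by linarith : (0:ℝ) ≤ -t) (by linarith : (0:ℝ) ≤ N - q),
      mul_nonneg (mul_nonneg (by linarith : (0:ℝ) ≤ 3 - t)
        (by linarith : (0:ℝ) ≤ 1 + t)) hNnn]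
  · rcases eq_or_lt_of_le ht3' with heq | hlt
    · -- t = 3 : then q = N
      have hqN : N ≤ q := by nlinarith
      nlinarith
    · have h3t : (0:ℝ) < 3 - t := by linarith
      have hX : 0 ≤ (1-t)*N + 2*q := (mul_nonneg_iff_of_pos_left h3t).mp hPSD
      nlinarith [mul_nonneg hpos.le hX,
        mul_nonneg (by linarith : (0:ℝ) ≤ 3 - t) hNnn]


/-- For `R, Rc ∈ SO(3)`, the induced 2-norm of `C(RcᵀR) = (1/2)(tr(RᵀRc) I - RᵀRc)`
is at most 1, i.e. `‖C v‖ ≤ ‖v‖` for every `v`. -/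
theorem stmt6 (R Rc : Matrix (Fin 3) (Fin 3) ℝ)
    (hR : Rᵀ * R = 1) (hRdet : R.det = 1) (hRc : Rcᵀ * Rc = 1) (hRcdet : Rc.det = 1) :
    let C : Matrix (Fin 3) (Fin 3) ℝ :=
      (1 / 2 : ℝ) • ((Rᵀ * Rc).trace • (1 : Matrix (Fin 3) (Fin 3) ℝ) - Rᵀ * Rc)
    ∀ v : Fin 3 → ℝ, _root_.enorm (C.mulVec v) ≤ _root_.enorm v := by
  intro C v
  set E : Matrix (Fin 3) (Fin 3) ℝ := Rᵀ * Rc with hEdef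
  have hRR : R * Rᵀ = 1 := mul_eq_one_comm.mp hR
  have hEt : Eᵀ = Rcᵀ * R := by rw [hEdef, transpose_mul, transpose_transpose]
  have hE : Eᵀ * E = 1 := by
    rw [hEt, hEdef, Matrix.mul_assoc, ← Matrix.mul_assoc R, hRR, Matrix.one_mul, hRc]
  have hE2 : E * Eᵀ = 1 := mul_eq_one_comm.mp hE
  have hdet : E.det = 1 := by
    rw [hEdef, det_mul, det_transpose, hRdet, hRcdet, one_mul]
  have hk := key E hE hE2 hdet v
  set t := E.trace with ht
  -- compute C.mulVec v
  have hCv : C.mulVec v = (1/2 : ℝ) • (t • v - E *ᵥ v) := by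
    show ((1 / 2 : ℝ) • (t • (1 : Matrix (Fin 3) (Fin 3) ℝ) - E)).mulVec v = _
    rw [Matrix.smul_mulVec, Matrix.sub_mulVec, Matrix.smul_mulVec,
      Matrix.one_mulVec]
  rw [_root_.enorm, _root_.enorm]
  apply Real.sqrt_le_sqrt
  rw [hCv]
  have hexp : ∀ x : Fin 3 → ℝ, (∑ i, x i ^ 2) = x ⬝ᵥ x := by
    intro x
    simp [dotProduct, Fin.sum_univ_three, sq]
  rw [hexp, hexp]
  have hdotexp : ((1/2 : ℝ) • (t • v - E *ᵥ v)) ⬝ᵥ ((1/2 : ℝ) • (t • v - E *ᵥ v))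
      = (1/4) * (t^2 * (v ⬝ᵥ v) - 2*t*(v ⬝ᵥ (E *ᵥ v)) + (E *ᵥ v) ⬝ᵥ (E *ᵥ v)) := by
    rw [smul_dotProduct, dotProduct_smul, dotProduct_sub, sub_dotProduct, sub_dotProduct,
      smul_dotProduct, smul_dotProduct, dotProduct_smul, dotProduct_smul,
      dotProduct_comm (E *ᵥ v) v]
    simp only [smul_eq_mul]
    ring
  rw [hdotexp]
  have hEvN : (E *ᵥ v) ⬝ᵥ (E *ᵥ v) = v ⬝ᵥ v := by
    have hdotT : ∀ w : Fin 3 → ℝ, v ⬝ᵥ (Eᵀ *ᵥ w) = (E *ᵥ v) ⬝ᵥ w := by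
      intro w
      rw [Matrix.dotProduct_mulVec, Matrix.vecMul_transpose]
    have h := congrArg (fun A => v ⬝ᵥ (A *ᵥ v)) hE
    simpa [← Matrix.mulVec_mulVec, hdotT, Matrix.one_mulVec] using h
  rw [hEvN]
  linarith
end

section
/- Let W, W̄, V, V̄ be matrices with ‖W‖ ≤ W_M, ‖V‖ ≤ V_M (Frobenius norms), and set W̃ = W - W̄, Ṽ = V - V̄. Let x be a vector, z = V^T x, z̄ = V̄^T x, z̃ = Ṽ^T x. Suppose σ: R^n → R^{n+1} satisfies ‖σ(·)‖∞ ≤ 1 and its Jacobian satisfies ‖σ'(·)‖ ≤ 1/4 componentwise. Then the quantity w = -W̃^T σ'(z̄) z - W^T (σ(z) - σ(z̄) - σ'(z̄) z̃) - ε, with ‖ε‖ ≤ ε_N, satisfies ‖w‖ ≤ C1 + C2 ‖Z̃‖ (1 + ‖x‖), where Z̃ = diag(W̃, Ṽ), C1 = 2 W_M + ε_N, and C2 = (1/4)(V_M + W_M). -/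
open Matrix

/-- Euclidean norm of a vector. -/
noncomputable def euclNorm {ι : Type*} [Fintype ι] (x : ι → ℝ) : ℝ := Real.sqrt (∑ i, x i ^ 2)

/-- Frobenius norm of a matrix. -/
noncomputable def fnorm {ι κ : Type*} [Fintype ι] [Fintype κ] (M : Matrix ι κ ℝ) : ℝ :=
  Real.sqrt (∑ i, ∑ j, M i j ^ 2)

/-- Scalar sigmoid `ς(s) = 1/(1 + e^{-s})`. -/
noncomputable def sigmoid (s : ℝ) : ℝ := 1 / (1 + Real.exp (-s))

/-- Vector sigmoid activation `σ(z) = [1, ς(z₁), …, ς(z_n)]`. -/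
noncomputable def sigvec {n : ℕ} (z : Fin n → ℝ) : Fin (n + 1) → ℝ :=
  Fin.cons 1 (fun i => sigmoid (z i))

/-- Jacobian `σ'(z)` of the vector sigmoid. -/
noncomputable def sigjac {n : ℕ} (z : Fin n → ℝ) : Matrix (Fin (n + 1)) (Fin n) ℝ :=
  Matrix.of fun i j => Fin.cases 0 (fun k => if k = j then deriv sigmoid (z j) else 0) i

section aux

lemma one_add_exp_pos (s : ℝ) : 0 < 1 + Real.exp (-s) := by positivity

lemma hasDerivAt_sigmoid (s : ℝ) :
    HasDerivAt sigmoid (Real.exp (-s) / (1 + Real.exp (-s)) ^ 2) s := by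
  have h1 : HasDerivAt (fun t : ℝ => 1 + Real.exp (-t)) (-Real.exp (-s)) s := by
    simpa using (((Real.hasDerivAt_exp (-s)).comp s (hasDerivAt_neg s)).const_add 1)
  have h2 := h1.inv (ne_of_gt (one_add_exp_pos s))
  have : sigmoid = fun t : ℝ => (1 + Real.exp (-t))⁻¹ := by
    funext t; simp [sigmoid, one_div]
  rw [this]
  exact (show HasDerivAt (fun t : ℝ => 1 + Real.exp (-t))⁻¹ (Real.exp (-s) / (1 + Real.exp (-s)) ^ 2) s by
    simpa [neg_div] using h2)

lemma deriv_sigmoid (s : ℝ) :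
    deriv sigmoid s = Real.exp (-s) / (1 + Real.exp (-s)) ^ 2 :=
  (hasDerivAt_sigmoid s).deriv

lemma deriv_sigmoid_nonneg (s : ℝ) : 0 ≤ deriv sigmoid s := by
  rw [deriv_sigmoid]; positivity

lemma deriv_sigmoid_le (s : ℝ) : deriv sigmoid s ≤ 1 / 4 := by
  rw [deriv_sigmoid, div_le_iff₀ (by positivity)]
  nlinarith [Real.exp_pos (-s), sq_nonneg (1 - Real.exp (-s))]

lemma sigmoid_mono : Monotone sigmoid := by
  intro a b h
  have : Real.exp (-b) ≤ Real.exp (-a) := Real.exp_le_exp.2 (by linarith)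
  exact one_div_le_one_div_of_le (one_add_exp_pos b) (by linarith)

lemma sigmoid_lip (a b : ℝ) : |sigmoid b - sigmoid a| ≤ 1 / 4 * |b - a| := by
  have := Convex.norm_image_sub_le_of_norm_deriv_le (𝕜 := ℝ) (f := sigmoid) (s := Set.univ)
    (fun x _ => (hasDerivAt_sigmoid x).differentiableAt)
    (fun x _ => by
      rw [Real.norm_eq_abs, abs_of_nonneg (deriv_sigmoid_nonneg x)]
      exact deriv_sigmoid_le x)
    convex_univ (Set.mem_univ a) (Set.mem_univ b)
  simpa [Real.norm_eq_abs] using this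

lemma sigmoid_taylor (a b : ℝ) :
    |sigmoid a - sigmoid b - deriv sigmoid b * (a - b)| ≤ |a - b| / 4 := by
  rcases le_total b a with h | h
  · have h1 : 0 ≤ sigmoid a - sigmoid b := sub_nonneg.2 (sigmoid_mono h)
    have h2 : sigmoid a - sigmoid b ≤ (a - b) / 4 := by
      have := sigmoid_lip b a
      rw [abs_of_nonneg h1, abs_of_nonneg (by linarith : (0:ℝ) ≤ a - b)] at this
      linarith
    have h3 : 0 ≤ deriv sigmoid b * (a - b) :=
      mul_nonneg (deriv_sigmoid_nonneg b) (by linarith)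
    have h4 : deriv sigmoid b * (a - b) ≤ (a - b) / 4 := by
      nlinarith [deriv_sigmoid_le b]
    rw [abs_of_nonneg (by linarith : (0:ℝ) ≤ a - b), abs_le]
    constructor <;> linarith
  · have h1 : sigmoid a - sigmoid b ≤ 0 := sub_nonpos.2 (sigmoid_mono h)
    have h2 : (a - b) / 4 ≤ sigmoid a - sigmoid b := by
      have := sigmoid_lip a b
      rw [abs_of_nonneg (sub_nonneg.2 (sigmoid_mono h)),
        abs_of_nonneg (by linarith : (0:ℝ) ≤ b - a)] at this
      linarith
    have h3 : deriv sigmoid b * (a - b) ≤ 0 :=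
      mul_nonpos_of_nonneg_of_nonpos (deriv_sigmoid_nonneg b) (by linarith)
    have h4 : (a - b) / 4 ≤ deriv sigmoid b * (a - b) := by
      nlinarith [deriv_sigmoid_le b, deriv_sigmoid_nonneg b]
    rw [abs_of_nonpos (by linarith : a - b ≤ 0), abs_le]
    constructor <;> linarith

section vec
variable {ι κ : Type*} [Fintype ι] [Fintype κ]

lemma euclNorm_nonneg (x : ι → ℝ) : 0 ≤ euclNorm x := Real.sqrt_nonneg _
lemma fnorm_nonneg (M : Matrix ι κ ℝ) : 0 ≤ fnorm M := Real.sqrt_nonneg _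

lemma euclNorm_sq (x : ι → ℝ) : euclNorm x ^ 2 = ∑ i, x i ^ 2 :=
  Real.sq_sqrt (Finset.sum_nonneg fun i _ => sq_nonneg _)

lemma fnorm_sq (M : Matrix ι κ ℝ) : fnorm M ^ 2 = ∑ i, ∑ j, M i j ^ 2 :=
  Real.sq_sqrt (Finset.sum_nonneg fun i _ => Finset.sum_nonneg fun j _ => sq_nonneg _)

lemma euclNorm_le_of_sq_le_sq {x : ι → ℝ} {c : ℝ} (hc : 0 ≤ c)
    (h : ∑ i, x i ^ 2 ≤ c ^ 2) : euclNorm x ≤ c := by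
  rw [euclNorm]
  calc Real.sqrt (∑ i, x i ^ 2) ≤ Real.sqrt (c ^ 2) := Real.sqrt_le_sqrt h
  _ = c := Real.sqrt_sq hc

lemma euclNorm_neg (x : ι → ℝ) : euclNorm (-x) = euclNorm x := by
  simp [euclNorm]

lemma euclNorm_add_le (u v : ι → ℝ) : euclNorm (u + v) ≤ euclNorm u + euclNorm v := by
  apply euclNorm_le_of_sq_le_sq (add_nonneg (euclNorm_nonneg u) (euclNorm_nonneg v))
  have hcs := Finset.sum_mul_sq_le_sq_mul_sq Finset.univ u v
  have h1 : (∑ i, u i * v i) ≤ euclNorm u * euclNorm v := by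
    have h2 : (∑ i, u i * v i) ^ 2 ≤ (euclNorm u * euclNorm v) ^ 2 := by
      rw [mul_pow, euclNorm_sq, euclNorm_sq]; exact hcs
    nlinarith [mul_nonneg (euclNorm_nonneg u) (euclNorm_nonneg v)]
  have h3 : ∑ i, (u + v) i ^ 2 = (∑ i, u i ^ 2) + 2 * (∑ i, u i * v i) + ∑ i, v i ^ 2 := by
    have he : ∀ i, (u + v) i ^ 2 = u i ^ 2 + 2 * (u i * v i) + v i ^ 2 := fun i => by
      simp only [Pi.add_apply]; ring
    rw [Finset.sum_congr rfl fun i _ => he i, Finset.sum_add_distrib, Finset.sum_add_distrib,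
      Finset.mul_sum]
  rw [h3]
  nlinarith [euclNorm_sq u, euclNorm_sq v]

lemma euclNorm_sub_le (u v : ι → ℝ) : euclNorm (u - v) ≤ euclNorm u + euclNorm v := by
  rw [sub_eq_add_neg]
  simpa [euclNorm_neg] using euclNorm_add_le u (-v)

lemma euclNorm_mulVec_le (M : Matrix ι κ ℝ) (v : κ → ℝ) :
    euclNorm (M.mulVec v) ≤ fnorm M * euclNorm v := by
  apply euclNorm_le_of_sq_le_sq (mul_nonneg (fnorm_nonneg M) (euclNorm_nonneg v))
  rw [mul_pow, fnorm_sq, euclNorm_sq, Finset.sum_mul]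
  apply Finset.sum_le_sum
  intro i _
  exact Finset.sum_mul_sq_le_sq_mul_sq Finset.univ _ _

lemma fnorm_transpose (M : Matrix ι κ ℝ) : fnorm Mᵀ = fnorm M := by
  rw [fnorm, fnorm, Finset.sum_comm]
  simp [Matrix.transpose_apply]

lemma fnorm_fromBlocks_left {ι' κ' : Type*} [Fintype ι'] [Fintype κ']
    (A : Matrix ι κ ℝ) (B : Matrix ι' κ' ℝ) :
    fnorm A ≤ fnorm (Matrix.fromBlocks A 0 0 B) := by
  rw [fnorm, fnorm]
  apply Real.sqrt_le_sqrt
  rw [Fintype.sum_sum_type]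
  simp only [Fintype.sum_sum_type, Matrix.fromBlocks_apply₁₁, Matrix.fromBlocks_apply₁₂,
    Matrix.fromBlocks_apply₂₁, Matrix.fromBlocks_apply₂₂]
  have : ∀ (s : ℝ), 0 ≤ s → s + 0 ≤ s := by intros; linarith
  refine le_trans ?_ (le_add_of_nonneg_right ?_)
  · apply Finset.sum_le_sum
    intro i _
    apply le_add_of_nonneg_right
    positivity
  · positivity

lemma fnorm_fromBlocks_right {ι' κ' : Type*} [Fintype ι'] [Fintype κ']
    (A : Matrix ι κ ℝ) (B : Matrix ι' κ' ℝ) :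
    fnorm B ≤ fnorm (Matrix.fromBlocks A 0 0 B) := by
  rw [fnorm, fnorm]
  apply Real.sqrt_le_sqrt
  rw [Fintype.sum_sum_type]
  simp only [Fintype.sum_sum_type, Matrix.fromBlocks_apply₁₁, Matrix.fromBlocks_apply₁₂,
    Matrix.fromBlocks_apply₂₁, Matrix.fromBlocks_apply₂₂]
  refine le_trans ?_ (le_add_of_nonneg_left ?_)
  · apply Finset.sum_le_sum
    intro i _
    apply le_add_of_nonneg_left
    positivity
  · positivity

end vec

lemma sigjac_mulVec {n : ℕ} (b v : Fin n → ℝ) :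
    (sigjac b).mulVec v = Fin.cons 0 (fun k => deriv sigmoid (b k) * v k) := by
  funext i
  refine Fin.cases ?_ (fun k => ?_) i
  · simp [Matrix.mulVec, dotProduct, sigjac]
  · simp [Matrix.mulVec, dotProduct, sigjac, ite_mul, Finset.sum_ite_eq]

lemma euclNorm_sigjac_mulVec {n : ℕ} (b v : Fin n → ℝ) :
    euclNorm ((sigjac b).mulVec v) ≤ 1 / 4 * euclNorm v := by
  rw [sigjac_mulVec]
  apply euclNorm_le_of_sq_le_sq (mul_nonneg (by norm_num) (euclNorm_nonneg _))
  rw [mul_pow, euclNorm_sq, Fin.sum_univ_succ]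
  simp only [Fin.cons_zero, Fin.cons_succ]
  have hb : ∀ k, (deriv sigmoid (b k) * v k) ^ 2 ≤ (1 / 4 : ℝ) ^ 2 * v k ^ 2 := by
    intro k
    have h1 := deriv_sigmoid_nonneg (b k)
    have h2 := deriv_sigmoid_le (b k)
    have : (deriv sigmoid (b k) * v k) ^ 2 = deriv sigmoid (b k) ^ 2 * v k ^ 2 := by ring
    rw [this]
    have : deriv sigmoid (b k) ^ 2 ≤ (1 / 4 : ℝ) ^ 2 := by nlinarith
    exact mul_le_mul_of_nonneg_right this (sq_nonneg _)
  have hsum : ∑ k, (deriv sigmoid (b k) * v k) ^ 2 ≤ ∑ k, (1 / 4 : ℝ) ^ 2 * v k ^ 2 :=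
    Finset.sum_le_sum fun k _ => hb k
  rw [← Finset.mul_sum] at hsum
  simpa using hsum

lemma euclNorm_taylor {n : ℕ} (z zbar : Fin n → ℝ) :
    euclNorm (sigvec z - sigvec zbar - (sigjac zbar).mulVec (z - zbar))
      ≤ 1 / 4 * euclNorm (z - zbar) := by
  apply euclNorm_le_of_sq_le_sq (mul_nonneg (by norm_num) (euclNorm_nonneg _))
  rw [mul_pow, euclNorm_sq, sigjac_mulVec, Fin.sum_univ_succ]
  simp only [Pi.sub_apply, sigvec, Fin.cons_zero, Fin.cons_succ]
  have key : ∀ k : Fin n,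
      (sigmoid (z k) - sigmoid (zbar k) - deriv sigmoid (zbar k) * (z k - zbar k)) ^ 2
        ≤ (1 / 4 : ℝ) ^ 2 * (z k - zbar k) ^ 2 := by
    intro k
    have h := sigmoid_taylor (z k) (zbar k)
    have h2 := pow_le_pow_left₀ (abs_nonneg _) h 2
    rw [sq_abs, div_pow, sq_abs] at h2
    calc (sigmoid (z k) - sigmoid (zbar k) - deriv sigmoid (zbar k) * (z k - zbar k)) ^ 2
        ≤ (z k - zbar k) ^ 2 / 4 ^ 2 := h2
      _ = (1 / 4 : ℝ) ^ 2 * (z k - zbar k) ^ 2 := by ring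
  have hsum : ∑ k, (sigmoid (z k) - sigmoid (zbar k)
        - deriv sigmoid (zbar k) * (z k - zbar k)) ^ 2
      ≤ ∑ k, (1 / 4 : ℝ) ^ 2 * (z k - zbar k) ^ 2 := Finset.sum_le_sum fun k _ => key k
  rw [← Finset.mul_sum] at hsum
  simpa using hsum

end aux

/-- Bound on the neural-network approximation residual: with `W̃ = W - W̄`, `Ṽ = V - V̄`,
`z = Vᵀx`, `z̄ = V̄ᵀx`, `z̃ = Ṽᵀx`, and
`w = -W̃ᵀ σ'(z̄) z - Wᵀ(σ(z) - σ(z̄) - σ'(z̄) z̃) - ε` with `‖ε‖ ≤ ε_N`, one has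
`‖w‖ ≤ C₁ + C₂ ‖Z̃‖ (1 + ‖x‖)` for `Z̃ = diag(W̃, Ṽ)`, `C₁ = 2W_M + ε_N`,
`C₂ = (1/4)(V_M + W_M)`. -/
theorem stmt9 {n p q : ℕ}
    (W Wbar : Matrix (Fin (n + 1)) (Fin q) ℝ) (V Vbar : Matrix (Fin p) (Fin n) ℝ)
    (x : Fin p → ℝ) (ε : Fin q → ℝ) (W_M V_M ε_N : ℝ)
    (hW : fnorm W ≤ W_M) (hV : fnorm V ≤ V_M) (hε : euclNorm ε ≤ ε_N) :
    let Wt := W - Wbar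
    let Vt := V - Vbar
    let z := Vᵀ.mulVec x
    let zbar := Vbarᵀ.mulVec x
    let zt := Vtᵀ.mulVec x
    let w : Fin q → ℝ :=
      -(Wtᵀ.mulVec ((sigjac zbar).mulVec z))
        - Wᵀ.mulVec (sigvec z - sigvec zbar - (sigjac zbar).mulVec zt) - ε
    let Zt := Matrix.fromBlocks Wt 0 0 Vt
    euclNorm w ≤ (2 * W_M + ε_N) + (1 / 4) * (V_M + W_M) * fnorm Zt * (1 + euclNorm x) := by
  intro Wt Vt z zbar zt w Zt
  have hW0 : 0 ≤ W_M := le_trans (fnorm_nonneg W) hW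
  have hV0 : 0 ≤ V_M := le_trans (fnorm_nonneg V) hV
  have hZt0 : 0 ≤ fnorm Zt := fnorm_nonneg Zt
  have hx0 : 0 ≤ euclNorm x := euclNorm_nonneg x
  have hzt : zt = z - zbar := by
    show (V - Vbar)ᵀ.mulVec x = _
    rw [Matrix.transpose_sub, Matrix.sub_mulVec]
  have hWtZ : fnorm Wt ≤ fnorm Zt := fnorm_fromBlocks_left Wt Vt
  have hVtZ : fnorm Vt ≤ fnorm Zt := fnorm_fromBlocks_right Wt Vt
  have hz : euclNorm z ≤ V_M * euclNorm x := by
    calc euclNorm z ≤ fnorm Vᵀ * euclNorm x := euclNorm_mulVec_le _ _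
      _ = fnorm V * euclNorm x := by rw [fnorm_transpose]
      _ ≤ V_M * euclNorm x := mul_le_mul_of_nonneg_right hV hx0
  have hztn : euclNorm zt ≤ fnorm Zt * euclNorm x := by
    calc euclNorm zt ≤ fnorm Vtᵀ * euclNorm x := euclNorm_mulVec_le _ _
      _ = fnorm Vt * euclNorm x := by rw [fnorm_transpose]
      _ ≤ fnorm Zt * euclNorm x := mul_le_mul_of_nonneg_right hVtZ hx0
  set A := Wtᵀ.mulVec ((sigjac zbar).mulVec z) with hA
  set B := Wᵀ.mulVec (sigvec z - sigvec zbar - (sigjac zbar).mulVec zt) with hB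
  have h1 : euclNorm w ≤ euclNorm A + euclNorm B + euclNorm ε := by
    have hw : w = -A - B - ε := rfl
    rw [hw]
    calc euclNorm (-A - B - ε) ≤ euclNorm (-A - B) + euclNorm ε := euclNorm_sub_le _ _
      _ ≤ (euclNorm (-A) + euclNorm B) + euclNorm ε :=
        add_le_add (euclNorm_sub_le _ _) le_rfl
      _ = euclNorm A + euclNorm B + euclNorm ε := by rw [euclNorm_neg]
  have eA : euclNorm A ≤ fnorm Zt * (1 / 4 * (V_M * euclNorm x)) := by
    calc euclNorm A ≤ fnorm Wtᵀ * euclNorm ((sigjac zbar).mulVec z) := euclNorm_mulVec_le _ _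
      _ = fnorm Wt * euclNorm ((sigjac zbar).mulVec z) := by rw [fnorm_transpose]
      _ ≤ fnorm Zt * (1 / 4 * (V_M * euclNorm x)) := by
          apply mul_le_mul hWtZ ?_ (euclNorm_nonneg _) hZt0
          calc euclNorm ((sigjac zbar).mulVec z) ≤ 1 / 4 * euclNorm z := euclNorm_sigjac_mulVec _ _
            _ ≤ 1 / 4 * (V_M * euclNorm x) := by linarith
  have eB : euclNorm B ≤ W_M * (1 / 4 * (fnorm Zt * euclNorm x)) := by
    calc euclNorm B ≤ fnorm Wᵀ * euclNorm (sigvec z - sigvec zbar - (sigjac zbar).mulVec zt) :=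
        euclNorm_mulVec_le _ _
      _ = fnorm W * euclNorm (sigvec z - sigvec zbar - (sigjac zbar).mulVec zt) := by
          rw [fnorm_transpose]
      _ ≤ W_M * (1 / 4 * (fnorm Zt * euclNorm x)) := by
          apply mul_le_mul hW ?_ (euclNorm_nonneg _) hW0
          calc euclNorm (sigvec z - sigvec zbar - (sigjac zbar).mulVec zt)
              ≤ 1 / 4 * euclNorm (z - zbar) := by rw [hzt]; exact euclNorm_taylor z zbar
            _ = 1 / 4 * euclNorm zt := by rw [hzt]
            _ ≤ 1 / 4 * (fnorm Zt * euclNorm x) := by linarith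
  nlinarith [mul_nonneg hV0 hZt0, mul_nonneg hW0 hZt0,
    mul_nonneg (mul_nonneg hV0 hZt0) hx0, mul_nonneg (mul_nonneg hW0 hZt0) hx0]
end

section
/- Let A in R^3 satisfy ‖A‖ ≤ k_x ‖e_x‖ + k_v ‖e_v‖ + B1 for nonnegative constants k_x, k_v, B1 and vectors e_x, e_v. Let R, Rc in SO(3) with b3 = R e_3, b3c = Rc e_3 = -A/‖A‖, e_3^T Rc^T R e_3 > 0, and suppose ‖(e_3^T Rc^T R e_3) R e_3 - Rc e_3‖ ≤ β. Define X = (f/(e_3^T Rc^T R e_3))((e_3^T Rc^T R e_3) R e_3 - Rc e_3) with f = -A^T R e_3. Then ‖X‖ ≤ (k_x ‖e_x‖ + k_v ‖e_v‖ + B1) β. -/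
open Matrix

lemma enorm_nonneg' (x : Fin 3 → ℝ) : 0 ≤ enorm3 x := Real.sqrt_nonneg _

lemma enorm_smul' (c : ℝ) (x : Fin 3 → ℝ) : enorm3 (c • x) = |c| * enorm3 x := by
  unfold enorm3
  have : ∑ i, (c • x) i ^ 2 = c ^ 2 * ∑ i, x i ^ 2 := by
    rw [Finset.mul_sum]; apply Finset.sum_congr rfl; intro i _
    simp [mul_pow]
  rw [this, Real.sqrt_mul (sq_nonneg c), Real.sqrt_sq_eq_abs]

/-- Bound on the thrust-direction mismatch term: with `‖A‖ ≤ k_x‖e_x‖ + k_v‖e_v‖ + B1`,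
`Rc e₃ = -A/‖A‖`, `e₃ᵀRcᵀRe₃ > 0`, `‖(e₃ᵀRcᵀRe₃) Re₃ - Rc e₃‖ ≤ β`,
`f = -AᵀRe₃`, and `X = (f/(e₃ᵀRcᵀRe₃))((e₃ᵀRcᵀRe₃) Re₃ - Rc e₃)`, one has
`‖X‖ ≤ (k_x‖e_x‖ + k_v‖e_v‖ + B1) β`. -/
theorem stmt16 (A e_x e_v : Fin 3 → ℝ) (k_x k_v B1 β : ℝ)
    (hkx : 0 ≤ k_x) (hkv : 0 ≤ k_v) (hB1 : 0 ≤ B1)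
    (hA : enorm3 A ≤ k_x * enorm3 e_x + k_v * enorm3 e_v + B1)
    (R Rc : Matrix (Fin 3) (Fin 3) ℝ)
    (hR : Rᵀ * R = 1) (hRdet : R.det = 1) (hRc : Rcᵀ * Rc = 1) (hRcdet : Rc.det = 1)
    (hb3c : Rc.mulVec ![0, 0, 1] = -(enorm3 A)⁻¹ • A)
    (hpos : 0 < ![0, 0, 1] ⬝ᵥ (Rcᵀ * R).mulVec ![0, 0, 1])
    (hβ : enorm3 ((![0, 0, 1] ⬝ᵥ (Rcᵀ * R).mulVec ![0, 0, 1]) • R.mulVec ![0, 0, 1]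
            - Rc.mulVec ![0, 0, 1]) ≤ β) :
    let f : ℝ := -(A ⬝ᵥ R.mulVec ![0, 0, 1])
    let X : Fin 3 → ℝ := (f / (![0, 0, 1] ⬝ᵥ (Rcᵀ * R).mulVec ![0, 0, 1])) •
      ((![0, 0, 1] ⬝ᵥ (Rcᵀ * R).mulVec ![0, 0, 1]) • R.mulVec ![0, 0, 1]
        - Rc.mulVec ![0, 0, 1])
    enorm3 X ≤ (k_x * enorm3 e_x + k_v * enorm3 e_v + B1) * β := by
  intro f X
  set e3 : Fin 3 → ℝ := ![0, 0, 1] with he3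
  set c : ℝ := e3 ⬝ᵥ (Rcᵀ * R).mulVec e3 with hc
  -- rewrite c as (Rc e₃) ⬝ᵥ (R e₃)
  have hcval : c = Rc.mulVec e3 ⬝ᵥ R.mulVec e3 := by
    rw [hc, ← Matrix.mulVec_mulVec, Matrix.dotProduct_mulVec, Matrix.vecMul_transpose]
  -- ‖A‖ > 0
  have hA0 : 0 < enorm3 A := by
    rcases lt_or_eq_of_le (enorm_nonneg' A) with h | h
    · exact h
    · exfalso
      have h0 : Rc.mulVec e3 = 0 := by rw [hb3c, ← h]; simp
      rw [hcval, h0] at hpos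
      simp at hpos
  -- c = ‖A‖⁻¹ * f
  have hcf : c = (enorm3 A)⁻¹ * f := by
    rw [hcval, hb3c]
    simp [smul_dotProduct, f]
    left; rfl
  have hcne : c ≠ 0 := ne_of_gt hpos
  have hfc : f / c = enorm3 A := by
    have hf : f = enorm3 A * c := by
      rw [hcf]; field_simp
    rw [hf]; field_simp
  have hX : enorm3 X = enorm3 A * enorm3 (c • R.mulVec e3 - Rc.mulVec e3) := by
    show enorm3 ((f / c) • _) = _
    rw [enorm_smul', hfc, abs_of_nonneg (le_of_lt hA0)]
  rw [hX]
  have hβ0 : 0 ≤ β := le_trans (enorm_nonneg' _) hβ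
  exact mul_le_mul hA hβ (enorm_nonneg' _) (le_trans (enorm_nonneg' A) hA)
end
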